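/- Let C₁, c₂ > 0 and suppose for every n ∈ N a nonnegative random variable μ_n is bounded by a constant, satisfies E[μ_n] ≤ C₁ 3^{-c₂ n}, and for n = n₁ + n₂ satisfies μ_n ≤ (1/#Q_{n₂}) Σ_{i=1}^{#Q_{n₂}} μ_{n₁}^{(i)} with {μ_{n₁}^{(i)}} i.i.d. copies of μ_{n₁}, bounded by a constant K, where #Q_{n₂} = 3^{n₂ d}. Then for any p ∈ (0,d) there is α > 0 (depending on d, c₂, p, K) such that for all t ≥ 1 and n ∈ N, P(μ_n ≥ C₁ 3^{-αn} t) ≤ exp(-c (t-1)² 3^{np}). -/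

import Mathlib

open MeasureTheory ProbabilityTheory Real

lemma integrable_exp_mul_of_bdd {Ω : Type*} [MeasurableSpace Ω] (μ : Measure Ω)
    [IsProbabilityMeasure μ] {Y : Ω → ℝ} (hY : Measurable Y) {K : ℝ}
    (hb : ∀ᵐ a ∂μ, 0 ≤ Y a ∧ Y a ≤ K) (l : ℝ) :
    Integrable (fun a => exp (l * Y a)) μ := by
  refine Integrable.mono' (integrable_const (exp (|l| * K))) ((hY.const_mul l).exp).aestronglyMeasurable ?_
  filter_upwards [hb] with a ⟨h0, h1⟩
  rw [Real.norm_eq_abs, abs_of_pos (exp_pos _), exp_le_exp]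
  calc l * Y a ≤ |l| * Y a := mul_le_mul_of_nonneg_right (le_abs_self l) h0
    _ ≤ |l| * K := mul_le_mul_of_nonneg_left h1 (abs_nonneg l)

lemma mgf_le_of_Icc {Ω : Type*} [MeasurableSpace Ω] (μ : Measure Ω)
    [IsProbabilityMeasure μ] {Y : Ω → ℝ} (hY : Measurable Y) {K : ℝ} (hK : 0 ≤ K)
    (hb : ∀ᵐ a ∂μ, 0 ≤ Y a ∧ Y a ≤ K) (l : ℝ) :
    mgf Y μ l ≤ exp (l * (∫ a, Y a ∂μ) + l ^ 2 * K ^ 2 / 2) := by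
  have hint : ∀ c : ℝ, Integrable (fun a => exp (c * Y a)) μ :=
    integrable_exp_mul_of_bdd μ hY hb
  set m := ∫ a, Y a ∂μ with hm
  set Ep := ∫ a, exp (l * Y a) ∂μ with hEp
  set Em := ∫ a, exp (-l * Y a) ∂μ with hEm
  have hEp0 : 0 ≤ Ep := integral_nonneg fun a => (exp_pos _).le
  have hEm0 : 0 ≤ Em := integral_nonneg fun a => (exp_pos _).le
  -- Jensen
  have hjen : exp (-l * m) ≤ Em := by
    have hYint : Integrable (fun a => -l * Y a) μ := by
      refine Integrable.mono' (integrable_const (|l| * K)) (hY.const_mul (-l)).aestronglyMeasurable ?_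
      filter_upwards [hb] with a ⟨h0, h1⟩
      rw [Real.norm_eq_abs, abs_mul, abs_neg, abs_of_nonneg h0]
      exact mul_le_mul_of_nonneg_left h1 (abs_nonneg l)
    have := ConvexOn.map_integral_le (μ := μ) (f := fun a => -l * Y a)
      (s := Set.univ) convexOn_exp continuous_exp.continuousOn isClosed_univ
      (Filter.Eventually.of_forall fun _ => Set.mem_univ _) hYint (hint (-l))
    rwa [integral_const_mul] at this
  -- symmetrization
  have hsymm : Ep * Em ≤ cosh (l * K) := by
    have key : ∀ᵐ x ∂μ, exp (l * Y x) * Em + exp (-l * Y x) * Ep ≤ 2 * cosh (l * K) := by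
      filter_upwards [hb] with x ⟨hx0, hx1⟩
      have h1 : exp (l * Y x) * Em + exp (-l * Y x) * Ep
          = ∫ y, (exp (l * Y x) * exp (-l * Y y) + exp (-l * Y x) * exp (l * Y y)) ∂μ := by
        rw [integral_add ((hint (-l)).const_mul _) ((hint l).const_mul _),
          integral_const_mul, integral_const_mul]
      rw [h1]
      calc ∫ y, (exp (l * Y x) * exp (-l * Y y) + exp (-l * Y x) * exp (l * Y y)) ∂μ
          ≤ ∫ _, 2 * cosh (l * K) ∂μ := by
            refine integral_mono_ae (((hint (-l)).const_mul _).add ((hint l).const_mul _))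
              (integrable_const _) ?_
            filter_upwards [hb] with y ⟨hy0, hy1⟩
            have : exp (l * Y x) * exp (-l * Y y) + exp (-l * Y x) * exp (l * Y y)
                = 2 * cosh (l * (Y x - Y y)) := by
              rw [Real.cosh_eq, ← exp_add, ← exp_add]
              ring_nf
            rw [this]
            have habs : |l * (Y x - Y y)| ≤ |l * K| := by
              rw [abs_mul, abs_mul, abs_of_nonneg hK]
              refine mul_le_mul_of_nonneg_left ?_ (abs_nonneg l)
              rw [abs_le]; constructor <;> linarith
            linarith [Real.cosh_le_cosh.2 habs]
        _ = 2 * cosh (l * K) := by simp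
    have h2 : ∫ x, (exp (l * Y x) * Em + exp (-l * Y x) * Ep) ∂μ = Ep * Em + Em * Ep := by
      rw [integral_add ((hint l).mul_const _) ((hint (-l)).mul_const _),
        integral_mul_const, integral_mul_const]
    have h3 : ∫ x, (exp (l * Y x) * Em + exp (-l * Y x) * Ep) ∂μ
        ≤ ∫ _, 2 * cosh (l * K) ∂μ :=
      integral_mono_ae (((hint l).mul_const _).add ((hint (-l)).mul_const _))
        (integrable_const _) key
    rw [h2] at h3
    simp only [integral_const, measure_univ, probReal_univ, ENNReal.toReal_one, smul_eq_mul, one_mul] at h3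
    linarith
  have hch : cosh (l * K) ≤ exp (l ^ 2 * K ^ 2 / 2) := by
    have := Real.cosh_le_exp_half_sq (l * K)
    rwa [mul_pow] at this
  calc mgf Y μ l = Ep := rfl
    _ = exp (l * m) * (exp (-l * m) * Ep) := by
        rw [← mul_assoc, ← exp_add]; simp
    _ ≤ exp (l * m) * (Em * Ep) :=
        mul_le_mul_of_nonneg_left (mul_le_mul_of_nonneg_right hjen hEp0) (exp_pos _).le
    _ ≤ exp (l * m) * exp (l ^ 2 * K ^ 2 / 2) := by
        rw [mul_comm Em Ep]
        exact mul_le_mul_of_nonneg_left (hsymm.trans hch) (exp_pos _).le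
    _ = exp (l * m + l ^ 2 * K ^ 2 / 2) := (exp_add _ _).symm

/-- Concentration from bounded i.i.d. subadditive averages and exponential decay of means:
if `E[μ_n] ≤ C₁ 3^{-c₂ n}` and `μ_{n₁+n₂}` is dominated by the average of `3^{n₂ d}` i.i.d.
copies of `μ_{n₁}`, then for any `p ∈ (0,d)` there is `α > 0` with
`P(μ_n ≥ C₁ 3^{-αn} t) ≤ exp(-c (t-1)² 3^{np})` for all `t ≥ 1`. -/
theorem mu_concentration {Ωs : Type*} [MeasurableSpace Ωs]
    (μ : Measure Ωs) [IsProbabilityMeasure μ]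
    (d : ℕ) (hd : 0 < d) (C₁ c₂ K : ℝ) (hC₁ : 0 < C₁) (hc₂ : 0 < c₂) (hK : 0 < K)
    (f : ℕ → Ωs → ℝ) (hmeas : ∀ n, Measurable (f n))
    (hbdd : ∀ n, ∀ᵐ a ∂μ, 0 ≤ f n a ∧ f n a ≤ K)
    (hmean : ∀ n : ℕ, ∫ a, f n a ∂μ ≤ C₁ * (3 : ℝ) ^ (-(c₂ * (n : ℝ))))
    (hsub : ∀ n₁ n₂ : ℕ, ∃ g : Fin (3 ^ (n₂ * d)) → Ωs → ℝ,
      (∀ i, Measurable (g i)) ∧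
      iIndepFun g μ ∧
      (∀ i, IdentDistrib (g i) (f n₁) μ μ) ∧
      (∀ i, ∀ᵐ a ∂μ, 0 ≤ g i a ∧ g i a ≤ K) ∧
      (∀ᵐ a ∂μ, f (n₁ + n₂) a ≤ (∑ i, g i a) / ((3 : ℝ) ^ (n₂ * d)))) :
    ∀ p : ℝ, 0 < p → p < d →
      ∃ α : ℝ, 0 < α ∧ ∃ c : ℝ, 0 < c ∧ ∀ t : ℝ, 1 ≤ t → ∀ n : ℕ,
        μ {a | C₁ * (3 : ℝ) ^ (-(α * (n : ℝ))) * t ≤ f n a} ≤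
          ENNReal.ofReal (Real.exp (-c * (t - 1) ^ 2 * (3 : ℝ) ^ (p * (n : ℝ)))) := by
  intro p hp hpd
  have hdpos : (0:ℝ) < d := by exact_mod_cast hd
  set θ : ℝ := (d - p) / (d + 2 * c₂) with hθ
  have hden : (0:ℝ) < d + 2 * c₂ := by linarith
  have hθ0 : 0 < θ := div_pos (by linarith) hden
  have hθ1 : θ ≤ 1 := by
    rw [div_le_one hden]; linarith
  have hθeq : θ * (d + 2 * c₂) = d - p := div_mul_cancel₀ _ (ne_of_gt hden)
  refine ⟨c₂ * θ, by positivity, C₁ ^ 2 * (3:ℝ) ^ (-(d:ℝ)) / (2 * K ^ 2), by positivity, ?_⟩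
  intro t ht n
  -- split n
  set n₁ : ℕ := ⌈θ * n⌉₊ with hn₁def
  have hn₁le : n₁ ≤ n := Nat.ceil_le.mpr (by nlinarith [Nat.cast_nonneg (α := ℝ) n])
  set n₂ : ℕ := n - n₁ with hn₂def
  have hnsum : n₁ + n₂ = n := Nat.add_sub_cancel' hn₁le
  obtain ⟨g, hgmeas, hgindep, hgid, hgbdd, hgle⟩ := hsub n₁ n₂
  rw [hnsum] at hgle
  set NR : ℝ := (3:ℝ) ^ (n₂ * d) with hNR
  have hNRpos : 0 < NR := by positivity
  set B : ℝ := C₁ * (3:ℝ) ^ (-(c₂ * θ * (n:ℝ))) with hB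
  have hBpos : 0 < B := by positivity
  set s : ℝ := B * (t - 1) with hs
  have hs0 : 0 ≤ s := mul_nonneg hBpos.le (by linarith)
  set l : ℝ := s / K ^ 2 with hl
  have hl0 : 0 ≤ l := div_nonneg hs0 (by positivity)
  -- event inclusion
  have hev : μ {a | B * t ≤ f n a} ≤ μ {a | NR * (B * t) ≤ ∑ i, g i a} := by
    refine measure_mono_ae ?_
    filter_upwards [hgle] with a h ha
    have h1 : B * t ≤ (∑ i, g i a) / NR := le_trans ha h
    have := (le_div_iff₀ hNRpos).mp h1
    show NR * (B * t) ≤ _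
    linarith
  -- integrability of each exp
  have hint : ∀ i, Integrable (fun ω => exp (l * g i ω)) μ := fun i =>
    integrable_exp_mul_of_bdd μ (hgmeas i) (hgbdd i) l
  have hintsum : Integrable (fun ω => exp (l * (∑ i, g i) ω)) μ :=
    hgindep.integrable_exp_mul_sum hgmeas (fun i _ => hint i)
  -- Chernoff
  have hcher := measure_ge_le_exp_mul_mgf (μ := μ) (X := ∑ i, g i)
    (ε := NR * (B * t)) hl0 hintsum
  -- mgf of sum
  have hmgf_i : ∀ i, mgf (g i) μ l = mgf (f n₁) μ l := by
    intro i
    have := ((hgid i).comp (measurable_exp.comp (measurable_id.const_mul l))).integral_eq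
    simpa [Function.comp, mgf] using this
  set m : ℝ := ∫ a, f n₁ a ∂μ with hm
  have hmB : m ≤ B := by
    refine (hmean n₁).trans ?_
    rw [hB]
    refine mul_le_mul_of_nonneg_left ?_ hC₁.le
    apply Real.rpow_le_rpow_of_exponent_le (by norm_num)
    have : θ * (n:ℝ) ≤ (n₁ : ℝ) := Nat.le_ceil _
    nlinarith
  have hmgf1 : mgf (f n₁) μ l ≤ exp (l * m + l ^ 2 * K ^ 2 / 2) :=
    mgf_le_of_Icc μ (hmeas n₁) hK.le (hbdd n₁) l
  have hmgfsum : mgf (∑ i, g i) μ l ≤ exp ((3 ^ (n₂ * d) : ℕ) * (l * m + l ^ 2 * K ^ 2 / 2)) := by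
    rw [hgindep.mgf_sum hgmeas Finset.univ]
    calc (∏ i : Fin (3 ^ (n₂ * d)), mgf (g i) μ l)
        = mgf (f n₁) μ l ^ (3 ^ (n₂ * d)) := by
          simp [hmgf_i, Finset.prod_const]
      _ ≤ exp (l * m + l ^ 2 * K ^ 2 / 2) ^ (3 ^ (n₂ * d)) :=
          pow_le_pow_left₀ mgf_nonneg hmgf1 _
      _ = exp ((3 ^ (n₂ * d) : ℕ) * (l * m + l ^ 2 * K ^ 2 / 2)) := by
          rw [← Real.exp_nat_mul]
  have hNcast : ((3 ^ (n₂ * d) : ℕ) : ℝ) = NR := by push_cast [hNR]; ring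
  -- exponent bound
  have hexp1 : exp (-l * (NR * (B * t))) * mgf (∑ i, g i) μ l
      ≤ exp (-(NR * s ^ 2 / (2 * K ^ 2))) := by
    calc exp (-l * (NR * (B * t))) * mgf (∑ i, g i) μ l
        ≤ exp (-l * (NR * (B * t))) * exp (NR * (l * m + l ^ 2 * K ^ 2 / 2)) := by
          refine mul_le_mul_of_nonneg_left ?_ (exp_pos _).le
          rw [← hNcast]; exact hmgfsum
      _ = exp (NR * (l * m + l ^ 2 * K ^ 2 / 2 - l * (B * t))) := by
          rw [← Real.exp_add]; ring_nf
      _ ≤ exp (-(NR * s ^ 2 / (2 * K ^ 2))) := by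
          rw [Real.exp_le_exp]
          have h1 : l * m + l ^ 2 * K ^ 2 / 2 - l * (B * t) ≤ -(s ^ 2 / (2 * K ^ 2)) := by
            have hBt : B * t = B + s := by rw [hs]; ring
            have h2 : l * m ≤ l * B := mul_le_mul_of_nonneg_left hmB hl0
            have h3 : l ^ 2 * K ^ 2 / 2 = s ^ 2 / (2 * K ^ 2) := by
              rw [hl]; field_simp
            have h4 : l * s = 2 * (s ^ 2 / (2 * K ^ 2)) := by rw [hl]; field_simp
            rw [hBt]
            have h5 : l * (B + s) = l * B + l * s := by ring
            linarith
          calc NR * (l * m + l ^ 2 * K ^ 2 / 2 - l * (B * t))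
              ≤ NR * (-(s ^ 2 / (2 * K ^ 2))) := mul_le_mul_of_nonneg_left h1 hNRpos.le
            _ = -(NR * s ^ 2 / (2 * K ^ 2)) := by ring
  -- exponent comparison with target
  have hfinal : -(NR * s ^ 2 / (2 * K ^ 2))
      ≤ -(C₁ ^ 2 * (3:ℝ) ^ (-(d:ℝ)) / (2 * K ^ 2)) * (t - 1) ^ 2 * (3:ℝ) ^ (p * (n:ℝ)) := by
    have hexps : (p * (n:ℝ)) + (-(d:ℝ)) ≤ ((n₂ * d : ℕ) : ℝ) + (-(c₂ * θ * n)) * 2 := by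
      have hceil : (n₁ : ℝ) < θ * n + 1 := Nat.ceil_lt_add_one (by positivity)
      have hcast : (n₂ : ℝ) = (n : ℝ) - n₁ := by
        rw [hn₂def]; push_cast [Nat.cast_sub hn₁le]; ring
      have : ((n₂ * d : ℕ) : ℝ) = ((n:ℝ) - n₁) * d := by push_cast [hcast]; ring
      rw [this]
      have h6 : (n:ℝ) - θ * n - 1 ≤ (n:ℝ) - n₁ := by linarith
      have h8 : ((n:ℝ) - θ * n - 1) * d ≤ ((n:ℝ) - n₁) * d :=
        mul_le_mul_of_nonneg_right h6 hdpos.le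
      have h7 : (n:ℝ) * (θ * ((d:ℝ) + 2 * c₂)) = (n:ℝ) * ((d:ℝ) - p) := by rw [hθeq]
      linarith [h8, h7]
    have hrp : (3:ℝ) ^ (p * (n:ℝ)) * (3:ℝ) ^ (-(d:ℝ))
        ≤ NR * ((3:ℝ) ^ (-(c₂ * θ * (n:ℝ)))) ^ 2 := by
      have hNReq : NR = (3:ℝ) ^ (((n₂ * d : ℕ)) : ℝ) := by
        rw [hNR, Real.rpow_natCast]
      have hsq : ((3:ℝ) ^ (-(c₂ * θ * (n:ℝ)))) ^ 2 = (3:ℝ) ^ ((-(c₂ * θ * (n:ℝ))) * 2) := by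
        rw [← Real.rpow_natCast ((3:ℝ) ^ (-(c₂ * θ * (n:ℝ)))) 2, ← Real.rpow_mul (by norm_num)]
        norm_num
      rw [hNReq, hsq, ← Real.rpow_add (by norm_num), ← Real.rpow_add (by norm_num)]
      exact Real.rpow_le_rpow_of_exponent_le (by norm_num) hexps
    have hseq : s ^ 2 = C₁ ^ 2 * ((3:ℝ) ^ (-(c₂ * θ * (n:ℝ)))) ^ 2 * (t - 1) ^ 2 := by
      rw [hs, hB]; ring
    have hXY : C₁ ^ 2 * (3:ℝ) ^ (-(d:ℝ)) * (t - 1) ^ 2 * (3:ℝ) ^ (p * (n:ℝ))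
        ≤ NR * s ^ 2 := by
      have hcoef : (0:ℝ) ≤ C₁ ^ 2 * (t - 1) ^ 2 := by positivity
      have hmul := mul_le_mul_of_nonneg_left hrp hcoef
      calc C₁ ^ 2 * (3:ℝ) ^ (-(d:ℝ)) * (t - 1) ^ 2 * (3:ℝ) ^ (p * (n:ℝ))
          = C₁ ^ 2 * (t - 1) ^ 2 * ((3:ℝ) ^ (p * (n:ℝ)) * (3:ℝ) ^ (-(d:ℝ))) := by ring
        _ ≤ C₁ ^ 2 * (t - 1) ^ 2 * (NR * ((3:ℝ) ^ (-(c₂ * θ * (n:ℝ)))) ^ 2) := hmul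
        _ = NR * (C₁ ^ 2 * ((3:ℝ) ^ (-(c₂ * θ * (n:ℝ)))) ^ 2 * (t - 1) ^ 2) := by ring
        _ = NR * s ^ 2 := by rw [← hseq]
    have hrw : -(C₁ ^ 2 * (3:ℝ) ^ (-(d:ℝ)) / (2 * K ^ 2)) * (t - 1) ^ 2 * (3:ℝ) ^ (p * (n:ℝ))
        = -(C₁ ^ 2 * (3:ℝ) ^ (-(d:ℝ)) * (t - 1) ^ 2 * (3:ℝ) ^ (p * (n:ℝ)) / (2 * K ^ 2)) := by
      ring
    rw [hrw]
    apply neg_le_neg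
    exact div_le_div_of_nonneg_right hXY (by positivity)
  -- assemble
  have hfin : μ {a | NR * (B * t) ≤ ∑ i, g i a} ≠ ⊤ := measure_ne_top _ _
  have hsetEq : {ω | NR * (B * t) ≤ (∑ i, g i) ω} = {a | NR * (B * t) ≤ ∑ i, g i a} := by
    ext a; rw [Set.mem_setOf_eq, Set.mem_setOf_eq, Finset.sum_apply]
  rw [hsetEq] at hcher
  calc μ {a | C₁ * (3:ℝ) ^ (-(c₂ * θ * (n:ℝ))) * t ≤ f n a}
      = μ {a | B * t ≤ f n a} := by rw [hB]
    _ ≤ μ {a | NR * (B * t) ≤ ∑ i, g i a} := hev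
    _ = ENNReal.ofReal ((μ {a | NR * (B * t) ≤ ∑ i, g i a}).toReal) :=
        (ENNReal.ofReal_toReal hfin).symm
    _ ≤ ENNReal.ofReal (Real.exp (-(C₁ ^ 2 * (3:ℝ) ^ (-(d:ℝ)) / (2 * K ^ 2)) * (t - 1) ^ 2 * (3:ℝ) ^ (p * (n:ℝ)))) := by
        refine ENNReal.ofReal_le_ofReal ?_
        refine le_trans hcher (le_trans hexp1 ?_)
        exact Real.exp_le_exp.mpr hfinal
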